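/- One-sided concentration for an anomalous sequence (lower tail): Let p, q be probability measures on a measurable space 𝒳 and k a measurable kernel with 0 ≤ k(x,y) ≤ K. Let m ≥ 2, let X be an i.i.d. m-sample from p and Y an i.i.d. m-sample from q, independent of X, and let 0 < δ < MMD²[p,q]. Then P( MMD_u²[X,Y] ≤ δ ) ≤ exp( − m (MMD²[p,q] − δ)² / (16K²) ). -/

import Mathlib

open MeasureTheory ProbabilityTheory Filter

open Real

section KeyIneq
variable (p : ℝ)

private noncomputable def Dfun (h : ℝ) : ℝ := 1 - p + p * exp h
private noncomputable def φfun (h : ℝ) : ℝ := h ^ 2 / 8 + p * h - log (Dfun p h)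
private noncomputable def φ'fun (h : ℝ) : ℝ := h / 4 + p - p * exp h / Dfun p h

variable {p}

private lemma Dpos (hp0 : 0 ≤ p) (hp1 : p ≤ 1) (h : ℝ) : 0 < Dfun p h := by
  rcases eq_or_lt_of_le hp0 with h0 | h0
  · simp [Dfun, ← h0]
  · have h1 : 0 < p * exp h := mul_pos h0 (exp_pos h)
    unfold Dfun; nlinarith

private lemma hasDerivD (h : ℝ) : HasDerivAt (Dfun p) (p * exp h) h := by
  exact (((hasDerivAt_exp h).const_mul p).const_add (1 - p))

private lemma hasDerivφ (hp0 : 0 ≤ p) (hp1 : p ≤ 1) (h : ℝ) :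
    HasDerivAt (φfun p) (φ'fun p h) h := by
  have hlog : HasDerivAt (fun h => log (Dfun p h)) (p * exp h / Dfun p h) h :=
    (hasDerivD h).log (Dpos hp0 hp1 h).ne'
  have h1 : HasDerivAt (fun h : ℝ => h ^ 2 / 8 + p * h) (h / 4 + p) h := by
    have := ((hasDerivAt_pow 2 h).div_const 8).add ((hasDerivAt_id h).const_mul p)
    exact this.congr_deriv (by rw [show (2:ℕ) - 1 = 1 from rfl, pow_one]; push_cast; ring)
  exact h1.sub hlog

private lemma hasDerivφ' (hp0 : 0 ≤ p) (hp1 : p ≤ 1) (h : ℝ) :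
    HasDerivAt (φ'fun p) (1 / 4 - p * exp h * (1 - p) / (Dfun p h) ^ 2) h := by
  have hq : HasDerivAt (fun h => p * exp h / Dfun p h)
      ((p * exp h * Dfun p h - p * exp h * (p * exp h)) / (Dfun p h) ^ 2) h :=
    ((hasDerivAt_exp h).const_mul p).div (hasDerivD h) (Dpos hp0 hp1 h).ne'
  have h1 : HasDerivAt (fun h : ℝ => h / 4 + p) (1 / 4) h := by
    simpa using ((hasDerivAt_id h).div_const 4).add_const p
  have h2 := h1.sub hq
  refine h2.congr_deriv ?_
  have hD : Dfun p h - p * exp h = 1 - p := by unfold Dfun; ring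
  rw [mul_comm (p * exp h) (Dfun p h)]
  rw [show p * exp h * (1 - p) = p * exp h * (Dfun p h - p * exp h) by rw [hD]]
  ring

private lemma φ''_nonneg (hp0 : 0 ≤ p) (hp1 : p ≤ 1) (h : ℝ) :
    0 ≤ 1 / 4 - p * exp h * (1 - p) / (Dfun p h) ^ 2 := by
  have hD := Dpos hp0 hp1 h
  rw [sub_nonneg, div_le_iff₀ (by positivity)]
  have hDeq : Dfun p h = (1 - p) + p * exp h := by unfold Dfun; ring
  nlinarith [sq_nonneg (p * exp h - (1 - p))]

private lemma φ'_mono (hp0 : 0 ≤ p) (hp1 : p ≤ 1) : Monotone (φ'fun p) := by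
  apply monotone_of_deriv_nonneg
  · exact fun h => (hasDerivφ' hp0 hp1 h).differentiableAt
  · intro h; rw [(hasDerivφ' hp0 hp1 h).deriv]; exact φ''_nonneg hp0 hp1 h

private lemma φ'_zero : φ'fun p 0 = 0 := by simp [φ'fun, Dfun]

private lemma φ_nonneg (hp0 : 0 ≤ p) (hp1 : p ≤ 1) (h : ℝ) : 0 ≤ φfun p h := by
  have hφ0 : φfun p 0 = 0 := by simp [φfun, Dfun]
  have hdiff : Differentiable ℝ (φfun p) := fun h => (hasDerivφ hp0 hp1 h).differentiableAt
  rcases le_or_gt 0 h with hh | hh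
  · have hmono : MonotoneOn (φfun p) (Set.Ici 0) := by
      apply monotoneOn_of_deriv_nonneg (convex_Ici 0) hdiff.continuous.continuousOn
        hdiff.differentiableOn
      intro x hx
      rw [(hasDerivφ hp0 hp1 x).deriv]
      rw [interior_Ici] at hx
      have := φ'_mono hp0 hp1 (le_of_lt hx)
      rw [φ'_zero] at this; exact this
    have := hmono Set.self_mem_Ici hh hh
    rwa [hφ0] at this
  · have hanti : AntitoneOn (φfun p) (Set.Iic 0) := by
      apply antitoneOn_of_deriv_nonpos (convex_Iic 0) hdiff.continuous.continuousOn
        hdiff.differentiableOn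
      intro x hx
      rw [(hasDerivφ hp0 hp1 x).deriv]
      rw [interior_Iic] at hx
      have := φ'_mono hp0 hp1 (le_of_lt hx)
      rw [φ'_zero] at this; exact this
    have := hanti (Set.mem_Iic.2 hh.le) Set.self_mem_Iic hh.le
    rwa [hφ0] at this

lemma key_ineq (hp0 : 0 ≤ p) (hp1 : p ≤ 1) (h : ℝ) :
    1 - p + p * exp h ≤ exp (p * h + h ^ 2 / 8) := by
  have h1 := φ_nonneg hp0 hp1 h
  have h2 : log (Dfun p h) ≤ p * h + h ^ 2 / 8 := by unfold φfun at h1; linarith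
  calc 1 - p + p * exp h = Dfun p h := rfl
    _ = exp (log (Dfun p h)) := (exp_log (Dpos hp0 hp1 h)).symm
    _ ≤ _ := exp_le_exp.2 h2

end KeyIneq

section Hoeffding
variable {E : Type*} [MeasurableSpace E] {μ : Measure E} [IsProbabilityMeasure μ]

lemma abs_le_max_of_bounds {a b y : ℝ} (ha : a ≤ y) (hb : y ≤ b) : |y| ≤ max |a| |b| := by
  rw [abs_le]
  refine ⟨?_, ?_⟩
  · calc -max |a| |b| ≤ -|a| := by simp
      _ ≤ a := neg_abs_le a
      _ ≤ y := ha
  · calc y ≤ b := hb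
      _ ≤ |b| := le_abs_self b
      _ ≤ max |a| |b| := le_max_right _ _

lemma integrable_of_bounds {f : E → ℝ} (hf : AEStronglyMeasurable f μ) {a b : ℝ}
    (ha : ∀ x, a ≤ f x) (hb : ∀ x, f x ≤ b) : Integrable f μ := by
  apply Integrable.mono' (integrable_const (max |a| |b|)) hf
  filter_upwards with x
  rw [Real.norm_eq_abs]
  exact abs_le_max_of_bounds (ha x) (hb x)

lemma integrable_exp_of_bounds {f : E → ℝ} (hf : Measurable f) {a b : ℝ}
    (ha : ∀ x, a ≤ f x) (hb : ∀ x, f x ≤ b) (t : ℝ) :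
    Integrable (fun x => exp (t * f x)) μ := by
  apply integrable_of_bounds ((hf.const_mul t).exp).aestronglyMeasurable
    (a := 0) (b := exp (|t| * max |a| |b|))
  · intro x; positivity
  · intro x
    apply exp_le_exp.2
    calc t * f x ≤ |t * f x| := le_abs_self _
      _ = |t| * |f x| := abs_mul t (f x)
      _ ≤ |t| * max |a| |b| :=
          mul_le_mul_of_nonneg_left (abs_le_max_of_bounds (ha x) (hb x)) (abs_nonneg t)

lemma hoeffding_mean_zero {f : E → ℝ} (hf : Measurable f) {a b : ℝ}
    (ha : ∀ x, a ≤ f x) (hb : ∀ x, f x ≤ b) (hmean : ∫ x, f x ∂μ = 0) (t : ℝ) :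
    ∫ x, exp (t * f x) ∂μ ≤ exp (t ^ 2 * (b - a) ^ 2 / 8) := by
  have hint : Integrable f μ := integrable_of_bounds hf.aestronglyMeasurable ha hb
  have ha0 : a ≤ 0 := by
    have : ∫ _ : E, a ∂μ ≤ ∫ x, f x ∂μ := integral_mono (integrable_const a) hint ha
    simpa [hmean] using this
  have hb0 : 0 ≤ b := by
    have : ∫ x, f x ∂μ ≤ ∫ _ : E, b ∂μ := integral_mono hint (integrable_const b) hb
    simpa [hmean] using this
  rcases eq_or_lt_of_le (ha0.trans hb0) with hab | hab
  · have haz : a = 0 := le_antisymm ha0 (hab ▸ hb0)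
    have hbz : b = 0 := hab ▸ haz
    have hfz : ∀ x, f x = 0 := fun x =>
      le_antisymm (hbz ▸ hb x) (haz ▸ ha x)
    simp only [hfz, mul_zero, exp_zero, integral_const, measure_univ, ENNReal.toReal_one, probReal_univ,
      smul_eq_mul, mul_one, one_mul]
    exact Real.one_le_exp (by positivity)
  · have hba : 0 < b - a := by linarith
    set pp : ℝ := -a / (b - a) with hpp
    have hp0 : 0 ≤ pp := div_nonneg (neg_nonneg.2 ha0) hba.le
    have hp1 : pp ≤ 1 := by rw [hpp, div_le_one hba]; linarith
    set c : ℝ := (b * exp (t * a) - a * exp (t * b)) / (b - a) with hc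
    set d : ℝ := (exp (t * b) - exp (t * a)) / (b - a) with hd
    have hptwise : ∀ x, exp (t * f x) ≤ c + d * f x := by
      intro x
      have h1 := convexOn_exp.2 (Set.mem_univ (t * a)) (Set.mem_univ (t * b))
        (show (0:ℝ) ≤ (b - f x) / (b - a) from div_nonneg (by linarith [hb x]) hba.le)
        (show (0:ℝ) ≤ (f x - a) / (b - a) from div_nonneg (by linarith [ha x]) hba.le)
        (show (b - f x) / (b - a) + (f x - a) / (b - a) = 1 by field_simp; ring)
      simp only [smul_eq_mul] at h1
      have harg : (b - f x) / (b - a) * (t * a) + (f x - a) / (b - a) * (t * b) = t * f x := by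
        field_simp; ring
      rw [harg] at h1
      calc exp (t * f x) ≤ (b - f x) / (b - a) * exp (t * a)
            + (f x - a) / (b - a) * exp (t * b) := h1
        _ = c + d * f x := by rw [hc, hd]; field_simp; ring
    have hle : ∫ x, exp (t * f x) ∂μ ≤ ∫ x, c + d * f x ∂μ :=
      integral_mono (integrable_exp_of_bounds hf ha hb t)
        ((integrable_const c).add (hint.const_mul d)) hptwise
    have heval : ∫ x, c + d * f x ∂μ = c := by
      rw [integral_add (integrable_const c) (hint.const_mul d)]
      simp [integral_const_mul, hmean]
    rw [heval] at hle
    refine hle.trans ?_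
    have hkey := key_ineq hp0 hp1 (t * (b - a))
    have he : exp (t * b) = exp (t * a) * exp (t * (b - a)) := by
      rw [← exp_add]; ring_nf
    have hcform : c = exp (t * a) * (1 - pp + pp * exp (t * (b - a))) := by
      rw [hc, hpp, he]; field_simp; ring
    calc c ≤ exp (t * a) * exp (pp * (t * (b - a)) + (t * (b - a)) ^ 2 / 8) := by
          rw [hcform]
          exact mul_le_mul_of_nonneg_left hkey (le_of_lt (exp_pos _))
      _ = exp (t * a + (pp * (t * (b - a)) + (t * (b - a)) ^ 2 / 8)) := (exp_add _ _).symm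
      _ = exp (t ^ 2 * (b - a) ^ 2 / 8) := by
          congr 1
          rw [hpp]
          field_simp
          ring

end Hoeffding

section MgfB
open Real MeasureTheory

variable {E : Type*} [MeasurableSpace E] {F : Type*} [MeasurableSpace F]

def mgfB (μ : Measure E) (f : E → ℝ) (v : ℝ) : Prop :=
  ∀ t : ℝ, ∫ x, exp (t * (f x - ∫ y, f y ∂μ)) ∂μ ≤ exp (t ^ 2 * v / 8)

lemma mgfB_of_bounds {μ : Measure E} [IsProbabilityMeasure μ] {f : E → ℝ}
    (hf : Measurable f) {a b : ℝ} (ha : ∀ x, a ≤ f x) (hb : ∀ x, f x ≤ b) :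
    mgfB μ f ((b - a) ^ 2) := by
  intro t
  have hint : Integrable f μ := integrable_of_bounds hf.aestronglyMeasurable ha hb
  set M : ℝ := ∫ y, f y ∂μ with hM
  have hg : Measurable fun x => f x - M := hf.sub measurable_const
  have hga : ∀ x, a - M ≤ f x - M := fun x => by linarith [ha x]
  have hgb : ∀ x, f x - M ≤ b - M := fun x => by linarith [hb x]
  have hmean : ∫ x, f x - M ∂μ = 0 := by
    rw [integral_sub hint (integrable_const M)]
    simp [hM]
  have := hoeffding_mean_zero hg hga hgb hmean t
  simpa using this

lemma mgfB_map {μ : Measure E} {T : E → F} (hT : Measurable T) {f : F → ℝ}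
    (hf : Measurable f) {v : ℝ} (h : mgfB μ (f ∘ T) v) :
    mgfB (Measure.map T μ) f v := by
  intro t
  have h1 : ∫ y, f y ∂(Measure.map T μ) = ∫ x, f (T x) ∂μ :=
    integral_map hT.aemeasurable hf.aestronglyMeasurable
  rw [h1]
  have h2 : ∫ y, exp (t * (f y - ∫ x, f (T x) ∂μ)) ∂(Measure.map T μ)
      = ∫ x, exp (t * (f (T x) - ∫ x, f (T x) ∂μ)) ∂μ :=
    integral_map hT.aemeasurable
      (((hf.sub measurable_const).const_mul t).exp).aestronglyMeasurable
  rw [h2]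
  exact h t

lemma mgfB_prod {μ : Measure E} {ν : Measure F} [IsProbabilityMeasure μ]
    [IsProbabilityMeasure ν] {f : E × F → ℝ} (hf : Measurable f)
    {C : ℝ} (hC : ∀ z, |f z| ≤ C) {v₁ v₂ : ℝ}
    (h1 : ∀ x, mgfB ν (fun y => f (x, y)) v₂)
    (h2 : mgfB μ (fun x => ∫ y, f (x, y) ∂ν) v₁) :
    mgfB (μ.prod ν) f (v₁ + v₂) := by
  intro t
  have hCle : ∀ z, -C ≤ f z := fun z => neg_le_of_abs_le (hC z)
  have hCge : ∀ z, f z ≤ C := fun z => le_of_abs_le (hC z)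
  have hfint : Integrable f (μ.prod ν) :=
    integrable_of_bounds hf.aestronglyMeasurable hCle hCge
  set g : E → ℝ := fun x => ∫ y, f (x, y) ∂ν with hgdef
  have hgmeas : Measurable g := hf.stronglyMeasurable.integral_prod_right'.measurable
  have hga : ∀ x, -C ≤ g x := by
    intro x
    have : ∫ _ : F, (-C : ℝ) ∂ν ≤ ∫ y, f (x, y) ∂ν :=
      integral_mono (integrable_const _)
        (integrable_of_bounds (hf.comp measurable_prodMk_left).aestronglyMeasurable
          (fun y => hCle (x, y)) (fun y => hCge (x, y)))
        (fun y => hCle (x, y))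
    simpa using this
  have hgb : ∀ x, g x ≤ C := by
    intro x
    have : ∫ y, f (x, y) ∂ν ≤ ∫ _ : F, (C : ℝ) ∂ν :=
      integral_mono
        (integrable_of_bounds (hf.comp measurable_prodMk_left).aestronglyMeasurable
          (fun y => hCle (x, y)) (fun y => hCge (x, y)))
        (integrable_const _) (fun y => hCge (x, y))
    simpa using this
  set M : ℝ := ∫ z, f z ∂(μ.prod ν) with hM
  have hMg : M = ∫ x, g x ∂μ := by
    rw [hM, hgdef, ← integral_prod _ hfint]
  have hexpint : Integrable (fun z => exp (t * (f z - M))) (μ.prod ν) :=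
    integrable_exp_of_bounds (hf.sub measurable_const)
      (fun z => by linarith [hCle z] : ∀ z, -C - M ≤ f z - M)
      (fun z => by linarith [hCge z] : ∀ z, f z - M ≤ C - M) t
  calc ∫ z, exp (t * (f z - M)) ∂(μ.prod ν)
      = ∫ x, ∫ y, exp (t * (f (x, y) - M)) ∂ν ∂μ := integral_prod _ hexpint
    _ ≤ ∫ x, exp (t * (g x - M)) * exp (t ^ 2 * v₂ / 8) ∂μ := by
        apply integral_mono hexpint.integral_prod_left
        · exact (integrable_exp_of_bounds (hgmeas.sub measurable_const)
            (fun x => by linarith [hga x] : ∀ x, -C - M ≤ g x - M)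
            (fun x => by linarith [hgb x] : ∀ x, g x - M ≤ C - M) t).mul_const _
        · intro x
          have hsplit : ∀ y, exp (t * (f (x, y) - M))
              = exp (t * (g x - M)) * exp (t * (f (x, y) - g x)) := by
            intro y; rw [← exp_add]; ring_nf
          simp only [hsplit]
          rw [integral_const_mul]
          apply mul_le_mul_of_nonneg_left _ (le_of_lt (exp_pos _))
          have := h1 x t
          simpa [hgdef] using this
    _ = (∫ x, exp (t * (g x - M)) ∂μ) * exp (t ^ 2 * v₂ / 8) := integral_mul_const _ _
    _ ≤ exp (t ^ 2 * v₁ / 8) * exp (t ^ 2 * v₂ / 8) := by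
        apply mul_le_mul_of_nonneg_right _ (le_of_lt (exp_pos _))
        have := h2 t
        rw [← hMg] at this
        simpa [hgdef] using this
    _ = exp (t ^ 2 * (v₁ + v₂) / 8) := by rw [← exp_add]; ring_nf

end MgfB

section PiMcDiarmid
open Real MeasureTheory

universe u

lemma norm_integral_le_of_bound {F : Type*} [MeasurableSpace F] {ν : Measure F}
    [IsProbabilityMeasure ν] {h : F → ℝ} {C : ℝ} (hC : ∀ y, |h y| ≤ C) :
    |∫ y, h y ∂ν| ≤ C := by
  have := norm_integral_le_of_norm_le_const (μ := ν) (f := h) (C := C)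
    (Filter.Eventually.of_forall fun y => by simpa using hC y)
  simpa using this

lemma mgfB_pi_fin (n : ℕ) :
    ∀ (α : Fin n → Type u) (inst : ∀ i, MeasurableSpace (α i))
      (μ : ∀ i, @Measure (α i) (inst i))
      (instP : ∀ i, IsProbabilityMeasure (μ i))
      (f : (∀ i, α i) → ℝ) (hf : Measurable f) (C : ℝ) (hC : ∀ x, |f x| ≤ C)
      (c : Fin n → ℝ)
      (hdiff : ∀ (i : Fin n) (x x' : ∀ i, α i),
        (∀ j, j ≠ i → x j = x' j) → f x - f x' ≤ c i),
      mgfB (Measure.pi μ) f (∑ i, c i ^ 2) := by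
  induction n with
  | zero =>
    intro α inst μ instP f hf C hC c hdiff
    intro t
    have hfconst : f = fun _ => f default :=
      funext fun x => congrArg f (Subsingleton.elim x default)
    rw [hfconst]
    simp
  | succ n ih =>
    intro α inst μ instP f hf C hC c hdiff
    set β : Fin n → Type u := fun j => α ((0 : Fin (n + 1)).succAbove j) with hβ
    set ν : ∀ j, Measure (β j) := fun j => μ ((0 : Fin (n + 1)).succAbove j) with hν
    haveI hνP : ∀ j, IsProbabilityMeasure (ν j) := fun j => instP _
    set T := MeasurableEquiv.piFinSuccAbove α 0 with hT
    have hmp : MeasurePreserving T (Measure.pi μ) ((μ 0).prod (Measure.pi ν)) :=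
      measurePreserving_piFinSuccAbove μ 0
    have hpieq : Measure.pi μ = Measure.map T.symm ((μ 0).prod (Measure.pi ν)) :=
      (hmp.symm T).map_eq.symm
    rw [hpieq, Fin.sum_univ_succAbove (fun i => c i ^ 2) 0]
    apply mgfB_map T.symm.measurable hf
    set G : α 0 × (∀ j, β j) → ℝ := f ∘ T.symm with hG
    have hGmeas : Measurable G := hf.comp T.symm.measurable
    have hsymm : ∀ (x₀ : α 0) (y : ∀ j, β j), T.symm (x₀, y) = Fin.insertNth 0 x₀ y := by
      intro x₀ y
      rw [hT, MeasurableEquiv.piFinSuccAbove_symm_apply]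
      rfl
    have hCG : ∀ z, |G z| ≤ C := fun z => hC _
    have h1 : ∀ x₀ : α 0, mgfB (Measure.pi ν) (fun y => G (x₀, y))
        (∑ j : Fin n, c ((0 : Fin (n + 1)).succAbove j) ^ 2) := by
      intro x₀
      apply ih β (fun j => inst _) ν hνP (fun y => G (x₀, y))
        (hGmeas.comp measurable_prodMk_left) C (fun y => hCG _)
        (fun j => c ((0 : Fin (n + 1)).succAbove j))
      intro j y y' hyy'
      apply hdiff ((0 : Fin (n + 1)).succAbove j)
      intro k hk
      simp only [hsymm]
      induction k using Fin.cases with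
      | zero => simp
      | succ l =>
        rw [Fin.insertNth_zero, Fin.insertNth_zero, Fin.cons_succ, Fin.cons_succ]
        apply hyy'
        intro hlj
        apply hk
        rw [hlj, Fin.succAbove_zero]
    -- the conditional mean function
    set g : α 0 → ℝ := fun x₀ => ∫ y, G (x₀, y) ∂(Measure.pi ν) with hg
    have hgmeas : Measurable g := hGmeas.stronglyMeasurable.integral_prod_right'.measurable
    have hgabs : ∀ x₀, |g x₀| ≤ C := fun x₀ => norm_integral_le_of_bound (fun y => hCG _)
    have hsecint : ∀ x₀ : α 0, Integrable (fun y => G (x₀, y)) (Measure.pi ν) := by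
      intro x₀
      exact integrable_of_bounds (hGmeas.comp measurable_prodMk_left).aestronglyMeasurable
        (fun y => neg_le_of_abs_le (hCG _)) (fun y => le_of_abs_le (hCG _))
    have hosc : ∀ x₀ x₀' : α 0, g x₀ - g x₀' ≤ c 0 := by
      intro x₀ x₀'
      rw [hg]
      simp only
      rw [← integral_sub (hsecint x₀) (hsecint x₀')]
      have hpt : ∀ y, G (x₀, y) - G (x₀', y) ≤ c 0 := by
        intro y
        apply hdiff 0
        intro k hk
        simp only [hsymm]
        induction k using Fin.cases with
        | zero => exact absurd rfl hk
        | succ l =>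
          rw [Fin.insertNth_zero, Fin.insertNth_zero, Fin.cons_succ, Fin.cons_succ]
      calc ∫ y, G (x₀, y) - G (x₀', y) ∂(Measure.pi ν)
          ≤ ∫ _, c 0 ∂(Measure.pi ν) :=
            integral_mono ((hsecint x₀).sub (hsecint x₀')) (integrable_const _) hpt
        _ = c 0 := by simp
    have hne : Nonempty (α 0) := by
      by_contra h
      rw [not_nonempty_iff] at h
      have h1 : (μ 0) Set.univ = 1 := measure_univ
      rw [Set.univ_eq_empty_iff.2 h] at h1
      simp at h1
    set a : ℝ := sInf (Set.range g) with ha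
    have hbdd : BddBelow (Set.range g) := by
      refine ⟨-C, ?_⟩
      rintro _ ⟨x₀, rfl⟩
      linarith [(abs_le.1 (hgabs x₀)).1]
    have ha' : ∀ x₀, a ≤ g x₀ := fun x₀ => csInf_le hbdd ⟨x₀, rfl⟩
    have hb' : ∀ x₀, g x₀ ≤ a + c 0 := by
      intro x₀
      have h1 : g x₀ - c 0 ≤ a := by
        apply le_csInf (Set.range_nonempty g)
        rintro _ ⟨x', rfl⟩
        linarith [hosc x₀ x']
      linarith
    have h2 : mgfB (μ 0) g (c 0 ^ 2) := by
      have := mgfB_of_bounds (μ := μ 0) hgmeas ha' hb'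
      simpa using this
    exact mgfB_prod hGmeas hCG h1 h2

lemma mgfB_pi {ι : Type*} [Fintype ι] {α : ι → Type u} [inst : ∀ i, MeasurableSpace (α i)]
    (μ : ∀ i, Measure (α i)) [instP : ∀ i, IsProbabilityMeasure (μ i)]
    {f : (∀ i, α i) → ℝ} (hf : Measurable f) {C : ℝ} (hC : ∀ x, |f x| ≤ C)
    {c : ι → ℝ}
    (hdiff : ∀ (i : ι) (x x' : ∀ i, α i), (∀ j, j ≠ i → x j = x' j) → f x - f x' ≤ c i) :
    mgfB (Measure.pi μ) f (∑ i, c i ^ 2) := by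
  set e : Fin (Fintype.card ι) ≃ ι := (Fintype.equivFin ι).symm with he
  set T := MeasurableEquiv.piCongrLeft α e with hTd
  have hmp : MeasurePreserving T (Measure.pi fun k => μ (e k)) (Measure.pi μ) :=
    measurePreserving_piCongrLeft μ e
  rw [← hmp.map_eq]
  have hsum : ∑ i, c i ^ 2 = ∑ k, c (e k) ^ 2 := (Equiv.sum_comp e fun i => c i ^ 2).symm
  rw [hsum]
  apply mgfB_map T.measurable hf
  have hTapp : ∀ (x : ∀ k, α (e k)) (l : Fin (Fintype.card ι)), T x (e l) = x l := by
    intro x l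
    exact Equiv.piCongrLeft_apply_apply α e x l
  apply mgfB_pi_fin _ _ _ (fun k => μ (e k)) (fun k => instP _) _ (hf.comp T.measurable) C (fun x => hC _)
  intro k x x' hxx'
  apply hdiff (e k)
  intro i hi
  obtain ⟨l, rfl⟩ : ∃ l, i = e l := ⟨e.symm i, (e.apply_symm_apply i).symm⟩
  rw [hTapp, hTapp]
  exact hxx' l (fun hlk => hi (by rw [hlk]))

lemma mgfB_lower_tail {E : Type*} [MeasurableSpace E] {μ : Measure E}
    [IsProbabilityMeasure μ] {f : E → ℝ} (hf : Measurable f) {C : ℝ}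
    (hC : ∀ x, |f x| ≤ C) {v : ℝ} (hv : 0 < v) (h : mgfB μ f v) {ε : ℝ} (hε : 0 < ε) :
    μ {x | f x ≤ (∫ y, f y ∂μ) - ε} ≤ ENNReal.ofReal (exp (-(2 * ε ^ 2) / v)) := by
  set M : ℝ := ∫ y, f y ∂μ with hM
  set t : ℝ := 4 * ε / v with htd
  have ht : 0 ≤ t := by positivity
  set X : E → ℝ := fun x => M - f x with hX
  have hXint : Integrable (fun ω => exp (t * X ω)) μ :=
    integrable_exp_of_bounds (measurable_const.sub hf) (a := M - C) (b := M + C)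
      (fun x => by show M - C ≤ M - f x; linarith [le_of_abs_le (hC x)])
      (fun x => by show M - f x ≤ M + C; linarith [neg_le_of_abs_le (hC x)]) t
  have hset : {x | f x ≤ M - ε} = {ω | ε ≤ X ω} := by
    ext x
    simp only [Set.mem_setOf_eq, hX]
    constructor <;> intro <;> linarith
  have hmgf : ProbabilityTheory.mgf X μ t ≤ exp (t ^ 2 * v / 8) := by
    rw [ProbabilityTheory.mgf]
    have h1 := h (-t)
    have h2 : ∀ x, exp (t * X x) = exp (-t * (f x - M)) := by
      intro x; congr 1; simp [hX]; ring
    calc ∫ x, exp (t * X x) ∂μ = ∫ x, exp (-t * (f x - M)) ∂μ := by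
          simp only [h2]
      _ ≤ exp ((-t) ^ 2 * v / 8) := h1
      _ = exp (t ^ 2 * v / 8) := by rw [neg_sq]
  have hchern := ProbabilityTheory.measure_ge_le_exp_mul_mgf (μ := μ) (X := X) ε ht hXint
  have hb2 : exp (-t * ε) * ProbabilityTheory.mgf X μ t ≤ exp (-(2 * ε ^ 2) / v) := by
    calc exp (-t * ε) * ProbabilityTheory.mgf X μ t
        ≤ exp (-t * ε) * exp (t ^ 2 * v / 8) :=
          mul_le_mul_of_nonneg_left hmgf (le_of_lt (exp_pos _))
      _ = exp (-t * ε + t ^ 2 * v / 8) := (exp_add _ _).symm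
      _ = exp (-(2 * ε ^ 2) / v) := by
          congr 1
          rw [htd]
          field_simp
          ring
  rw [hset]
  have hne : μ {ω | ε ≤ X ω} ≠ ⊤ := measure_ne_top μ _
  rw [← ENNReal.ofReal_toReal hne]
  exact ENNReal.ofReal_le_ofReal (hchern.trans hb2)

end PiMcDiarmid


noncomputable def mmdSq {𝓧 : Type*} [MeasurableSpace 𝓧]
    (κ : 𝓧 → 𝓧 → ℝ) (p q : Measure 𝓧) : ℝ :=
  (∫ x, ∫ x', κ x x' ∂p ∂p) - 2 * (∫ x, ∫ y, κ x y ∂q ∂p)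
    + (∫ y, ∫ y', κ y y' ∂q ∂q)

noncomputable def mmdU {𝓧 : Type*} (κ : 𝓧 → 𝓧 → ℝ)
    {ι₁ ι₂ : Type*} [Fintype ι₁] [Fintype ι₂] [DecidableEq ι₁] [DecidableEq ι₂]
    (X : ι₁ → 𝓧) (Y : ι₂ → 𝓧) : ℝ :=
  (1 / ((Fintype.card ι₁ : ℝ) * ((Fintype.card ι₁ : ℝ) - 1))) *
      ∑ i : ι₁, ∑ j ∈ Finset.univ.erase i, κ (X i) (X j)
    + (1 / ((Fintype.card ι₂ : ℝ) * ((Fintype.card ι₂ : ℝ) - 1))) *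
      ∑ i : ι₂, ∑ j ∈ Finset.univ.erase i, κ (Y i) (Y j)
    - (2 / ((Fintype.card ι₁ : ℝ) * (Fintype.card ι₂ : ℝ))) *
      ∑ i : ι₁, ∑ j : ι₂, κ (X i) (Y j)

noncomputable section App
open Real MeasureTheory

variable {𝓧 : Type*} [MeasurableSpace 𝓧]

def SxxSum {m : ℕ} (κ : 𝓧 → 𝓧 → ℝ) (X : Fin m → 𝓧) : ℝ :=
  ∑ i : Fin m, ∑ j ∈ Finset.univ.erase i, κ (X i) (X j)

def SxySum {m : ℕ} (κ : 𝓧 → 𝓧 → ℝ) (X Y : Fin m → 𝓧) : ℝ :=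
  ∑ i : Fin m, ∑ j : Fin m, κ (X i) (Y j)

noncomputable def mmdUF {m : ℕ} (κ : 𝓧 → 𝓧 → ℝ) (X Y : Fin m → 𝓧) : ℝ :=
  (1 / ((m : ℝ) * ((m : ℝ) - 1))) * SxxSum κ X
    + (1 / ((m : ℝ) * ((m : ℝ) - 1))) * SxxSum κ Y
    - (2 / ((m : ℝ) * (m : ℝ))) * SxySum κ X Y

lemma mmdU_eq_mmdUF {m : ℕ} (κ : 𝓧 → 𝓧 → ℝ) (X Y : Fin m → 𝓧) :
    mmdU κ X Y = mmdUF κ X Y := by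
  simp [mmdU, mmdUF, SxxSum, SxySum, Fintype.card_fin]

section Bounds
variable {m : ℕ} {κ : 𝓧 → 𝓧 → ℝ} {K : ℝ}

lemma kabs_le (hb : ∀ x y, 0 ≤ κ x y ∧ κ x y ≤ K) (hK : 0 ≤ K) (a b : 𝓧) : |κ a b| ≤ K :=
  abs_le.2 ⟨by linarith [(hb a b).1], (hb a b).2⟩

lemma kdiff_le (hb : ∀ x y, 0 ≤ κ x y ∧ κ x y ≤ K) (a b a' b' : 𝓧) : |κ a b - κ a' b'| ≤ K :=
  abs_le.2 ⟨by linarith [(hb a b).1, (hb a' b').2], by linarith [(hb a b).2, (hb a' b').1]⟩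

lemma SxxSum_abs_le (hb : ∀ x y, 0 ≤ κ x y ∧ κ x y ≤ K) (hK : 0 ≤ K) (X : Fin m → 𝓧) :
    |SxxSum κ X| ≤ (m : ℝ) * ((m : ℝ) - 1) * K := by
  have hm1 : (1 : ℝ) ≤ m ∨ m = 0 := by
    rcases Nat.eq_zero_or_pos m with h | h
    · exact Or.inr h
    · exact Or.inl (by exact_mod_cast h)
  calc |SxxSum κ X| ≤ ∑ i : Fin m, |∑ j ∈ Finset.univ.erase i, κ (X i) (X j)| :=
        Finset.abs_sum_le_sum_abs _ _
    _ ≤ ∑ i : Fin m, ∑ j ∈ Finset.univ.erase i, |κ (X i) (X j)| :=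
        Finset.sum_le_sum fun i _ => Finset.abs_sum_le_sum_abs _ _
    _ ≤ ∑ i : Fin m, ∑ _j ∈ Finset.univ.erase i, K :=
        Finset.sum_le_sum fun i _ => Finset.sum_le_sum fun j _ => kabs_le hb hK _ _
    _ = (m : ℝ) * (((m : ℝ) - 1) * K) := by
        rcases Nat.eq_zero_or_pos m with h | h
        · subst h; simp
        · simp only [Finset.sum_const, Finset.card_erase_of_mem (Finset.mem_univ _),
            Finset.card_univ, Fintype.card_fin, nsmul_eq_mul]
          rw [Nat.cast_sub (by omega : 1 ≤ m)]
          push_cast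
          ring
    _ = (m : ℝ) * ((m : ℝ) - 1) * K := by ring

lemma SxySum_abs_le (hb : ∀ x y, 0 ≤ κ x y ∧ κ x y ≤ K) (hK : 0 ≤ K) (X Y : Fin m → 𝓧) :
    |SxySum κ X Y| ≤ (m : ℝ) * (m : ℝ) * K := by
  calc |SxySum κ X Y| ≤ ∑ i : Fin m, |∑ j : Fin m, κ (X i) (Y j)| :=
        Finset.abs_sum_le_sum_abs _ _
    _ ≤ ∑ i : Fin m, ∑ j : Fin m, |κ (X i) (Y j)| :=
        Finset.sum_le_sum fun i _ => Finset.abs_sum_le_sum_abs _ _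
    _ ≤ ∑ _i : Fin m, ∑ _j : Fin m, K :=
        Finset.sum_le_sum fun i _ => Finset.sum_le_sum fun j _ => kabs_le hb hK _ _
    _ = (m : ℝ) * (m : ℝ) * K := by
        simp only [Finset.sum_const, Finset.card_univ, Fintype.card_fin, nsmul_eq_mul]
        ring

lemma mmdUF_abs_le (hb : ∀ x y, 0 ≤ κ x y ∧ κ x y ≤ K) (hK : 0 ≤ K) (hm : 2 ≤ m) (X Y : Fin m → 𝓧) :
    |mmdUF κ X Y| ≤ 4 * K := by
  have hm1 : (1 : ℝ) < (m : ℝ) := by exact_mod_cast hm.trans_lt' one_lt_two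
  have hmpos : (0 : ℝ) < (m : ℝ) := by linarith
  have hc1 : (0 : ℝ) < (m : ℝ) * ((m : ℝ) - 1) := by nlinarith
  have h1 := SxxSum_abs_le hb hK X
  have h2 := SxxSum_abs_le hb hK Y
  have h3 := SxySum_abs_le hb hK X Y
  have e1 : (1 / ((m : ℝ) * ((m : ℝ) - 1))) * ((m : ℝ) * ((m : ℝ) - 1) * K) = K := by
    have : (m:ℝ) - 1 ≠ 0 := by linarith
    field_simp
  have e3 : (2 / ((m : ℝ) * (m : ℝ))) * ((m : ℝ) * (m : ℝ) * K) = 2 * K := by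
    field_simp
  have hb1 : |(1 / ((m : ℝ) * ((m : ℝ) - 1))) * SxxSum κ X| ≤ K := by
    rw [abs_mul, abs_of_pos (by positivity : (0:ℝ) < 1 / ((m : ℝ) * ((m : ℝ) - 1)))]
    calc _ ≤ (1 / ((m : ℝ) * ((m : ℝ) - 1))) * ((m : ℝ) * ((m : ℝ) - 1) * K) :=
          mul_le_mul_of_nonneg_left h1 (by positivity)
      _ = K := e1
  have hb2 : |(1 / ((m : ℝ) * ((m : ℝ) - 1))) * SxxSum κ Y| ≤ K := by
    rw [abs_mul, abs_of_pos (by positivity : (0:ℝ) < 1 / ((m : ℝ) * ((m : ℝ) - 1)))]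
    calc _ ≤ (1 / ((m : ℝ) * ((m : ℝ) - 1))) * ((m : ℝ) * ((m : ℝ) - 1) * K) :=
          mul_le_mul_of_nonneg_left h2 (by positivity)
      _ = K := e1
  have hb3 : |(2 / ((m : ℝ) * (m : ℝ))) * SxySum κ X Y| ≤ 2 * K := by
    rw [abs_mul, abs_of_pos (by positivity : (0:ℝ) < 2 / ((m : ℝ) * (m : ℝ)))]
    calc _ ≤ (2 / ((m : ℝ) * (m : ℝ))) * ((m : ℝ) * (m : ℝ) * K) :=
          mul_le_mul_of_nonneg_left h3 (by positivity)
      _ = 2 * K := e3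
  calc |mmdUF κ X Y| ≤ |(1 / ((m : ℝ) * ((m : ℝ) - 1))) * SxxSum κ X
        + (1 / ((m : ℝ) * ((m : ℝ) - 1))) * SxxSum κ Y|
        + |(2 / ((m : ℝ) * (m : ℝ))) * SxySum κ X Y| := abs_sub _ _
    _ ≤ |(1 / ((m : ℝ) * ((m : ℝ) - 1))) * SxxSum κ X|
        + |(1 / ((m : ℝ) * ((m : ℝ) - 1))) * SxxSum κ Y|
        + |(2 / ((m : ℝ) * (m : ℝ))) * SxySum κ X Y| := by
          gcongr
          exact abs_add_le _ _
    _ ≤ K + K + 2 * K := by gcongr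
    _ = 4 * K := by ring

lemma SxxSum_diff_le (hb : ∀ x y, 0 ≤ κ x y ∧ κ x y ≤ K) (i₀ : Fin m)
    (X X' : Fin m → 𝓧) (hX : ∀ j, j ≠ i₀ → X j = X' j) :
    |SxxSum κ X - SxxSum κ X'| ≤ 2 * ((m : ℝ) - 1) * K := by
  have hm : 0 < m := i₀.pos
  have hrw : SxxSum κ X - SxxSum κ X'
      = ∑ i : Fin m, ∑ j ∈ Finset.univ.erase i, (κ (X i) (X j) - κ (X' i) (X' j)) := by
    unfold SxxSum
    rw [← Finset.sum_sub_distrib]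
    exact Finset.sum_congr rfl fun i _ => (Finset.sum_sub_distrib _ _).symm
  have hcard : ((Finset.univ.erase i₀).card : ℝ) = (m : ℝ) - 1 := by
    rw [Finset.card_erase_of_mem (Finset.mem_univ _), Finset.card_univ, Fintype.card_fin,
      Nat.cast_sub (by omega : 1 ≤ m), Nat.cast_one]
  rw [hrw]
  set d : Fin m → Fin m → ℝ := fun i j => κ (X i) (X j) - κ (X' i) (X' j) with hd
  calc |∑ i : Fin m, ∑ j ∈ Finset.univ.erase i, d i j|
      ≤ ∑ i : Fin m, |∑ j ∈ Finset.univ.erase i, d i j| := Finset.abs_sum_le_sum_abs _ _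
    _ = |∑ j ∈ Finset.univ.erase i₀, d i₀ j|
        + ∑ i ∈ Finset.univ.erase i₀, |∑ j ∈ Finset.univ.erase i, d i j| :=
        (Finset.add_sum_erase _ _ (Finset.mem_univ i₀)).symm
    _ ≤ (((m : ℝ) - 1) * K) + (((m : ℝ) - 1) * K) := by
        gcongr ?_ + ?_
        · calc |∑ j ∈ Finset.univ.erase i₀, d i₀ j|
              ≤ ∑ j ∈ Finset.univ.erase i₀, |d i₀ j| := Finset.abs_sum_le_sum_abs _ _
            _ ≤ ∑ _j ∈ Finset.univ.erase i₀, K :=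
                Finset.sum_le_sum fun j _ => kdiff_le hb _ _ _ _
            _ = ((m : ℝ) - 1) * K := by rw [Finset.sum_const, nsmul_eq_mul, hcard]
        · calc ∑ i ∈ Finset.univ.erase i₀, |∑ j ∈ Finset.univ.erase i, d i j|
              ≤ ∑ _i ∈ Finset.univ.erase i₀, K := by
                apply Finset.sum_le_sum
                intro i hi
                have hii : i ≠ i₀ := (Finset.mem_erase.1 hi).1
                have hsingle : ∑ j ∈ Finset.univ.erase i, d i j = d i i₀ := by
                  apply Finset.sum_eq_single_of_mem i₀
                    (Finset.mem_erase.2 ⟨hii.symm, Finset.mem_univ _⟩)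
                  intro j hj hji
                  rw [hd]
                  simp only
                  rw [hX i hii, hX j hji, sub_self]
                rw [hsingle]
                exact kdiff_le hb _ _ _ _
            _ = ((m : ℝ) - 1) * K := by rw [Finset.sum_const, nsmul_eq_mul, hcard]
    _ = 2 * ((m : ℝ) - 1) * K := by ring

lemma SxySum_diffX_le (hb : ∀ x y, 0 ≤ κ x y ∧ κ x y ≤ K) (i₀ : Fin m)
    (X X' Y : Fin m → 𝓧) (hX : ∀ j, j ≠ i₀ → X j = X' j) :
    |SxySum κ X Y - SxySum κ X' Y| ≤ (m : ℝ) * K := by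
  have hrw : SxySum κ X Y - SxySum κ X' Y
      = ∑ i : Fin m, ∑ j : Fin m, (κ (X i) (Y j) - κ (X' i) (Y j)) := by
    unfold SxySum
    rw [← Finset.sum_sub_distrib]
    exact Finset.sum_congr rfl fun i _ => (Finset.sum_sub_distrib _ _).symm
  rw [hrw]
  have houter : ∑ i : Fin m, ∑ j : Fin m, (κ (X i) (Y j) - κ (X' i) (Y j))
      = ∑ j : Fin m, (κ (X i₀) (Y j) - κ (X' i₀) (Y j)) := by
    apply Finset.sum_eq_single_of_mem i₀ (Finset.mem_univ _)
    intro i _ hii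
    apply Finset.sum_eq_zero
    intro j _
    rw [hX i hii, sub_self]
  rw [houter]
  calc |∑ j : Fin m, (κ (X i₀) (Y j) - κ (X' i₀) (Y j))|
      ≤ ∑ j : Fin m, |κ (X i₀) (Y j) - κ (X' i₀) (Y j)| := Finset.abs_sum_le_sum_abs _ _
    _ ≤ ∑ _j : Fin m, K := Finset.sum_le_sum fun j _ => kdiff_le hb _ _ _ _
    _ = (m : ℝ) * K := by
        rw [Finset.sum_const, nsmul_eq_mul, Finset.card_univ, Fintype.card_fin]

lemma SxySum_diffY_le (hb : ∀ x y, 0 ≤ κ x y ∧ κ x y ≤ K) (j₀ : Fin m)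
    (X Y Y' : Fin m → 𝓧) (hY : ∀ j, j ≠ j₀ → Y j = Y' j) :
    |SxySum κ X Y - SxySum κ X Y'| ≤ (m : ℝ) * K := by
  have hrw : SxySum κ X Y - SxySum κ X Y'
      = ∑ i : Fin m, ∑ j : Fin m, (κ (X i) (Y j) - κ (X i) (Y' j)) := by
    unfold SxySum
    rw [← Finset.sum_sub_distrib]
    exact Finset.sum_congr rfl fun i _ => (Finset.sum_sub_distrib _ _).symm
  rw [hrw]
  have hinner : ∀ i : Fin m, ∑ j : Fin m, (κ (X i) (Y j) - κ (X i) (Y' j))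
      = κ (X i) (Y j₀) - κ (X i) (Y' j₀) := by
    intro i
    apply Finset.sum_eq_single_of_mem j₀ (Finset.mem_univ _)
    intro j _ hjj
    rw [hY j hjj, sub_self]
  simp only [hinner]
  calc |∑ i : Fin m, (κ (X i) (Y j₀) - κ (X i) (Y' j₀))|
      ≤ ∑ i : Fin m, |κ (X i) (Y j₀) - κ (X i) (Y' j₀)| := Finset.abs_sum_le_sum_abs _ _
    _ ≤ ∑ _i : Fin m, K := Finset.sum_le_sum fun i _ => kdiff_le hb _ _ _ _
    _ = (m : ℝ) * K := by
        rw [Finset.sum_const, nsmul_eq_mul, Finset.card_univ, Fintype.card_fin]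

lemma mmdUF_diffX_le (hb : ∀ x y, 0 ≤ κ x y ∧ κ x y ≤ K) (hm : 2 ≤ m) (i₀ : Fin m)
    (X X' Y : Fin m → 𝓧) (hX : ∀ j, j ≠ i₀ → X j = X' j) :
    mmdUF κ X Y - mmdUF κ X' Y ≤ 4 * K / (m : ℝ) := by
  have hm1 : (1 : ℝ) < (m : ℝ) := by exact_mod_cast hm.trans_lt' one_lt_two
  have hm0 : (m : ℝ) ≠ 0 := by linarith
  have hm1' : (m : ℝ) - 1 ≠ 0 := by linarith
  have hc1 : (0 : ℝ) < 1 / ((m : ℝ) * ((m : ℝ) - 1)) :=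
    div_pos one_pos (mul_pos (by linarith) (by linarith))
  have hc2 : (0 : ℝ) < 2 / ((m : ℝ) * (m : ℝ)) :=
    div_pos two_pos (mul_pos (by linarith) (by linarith))
  have h1 := SxxSum_diff_le hb i₀ X X' hX
  have h2 := SxySum_diffX_le hb i₀ X X' Y hX
  have hkey : mmdUF κ X Y - mmdUF κ X' Y
      = (1 / ((m : ℝ) * ((m : ℝ) - 1))) * (SxxSum κ X - SxxSum κ X')
        - (2 / ((m : ℝ) * (m : ℝ))) * (SxySum κ X Y - SxySum κ X' Y) := by
    unfold mmdUF; ring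
  have e1 : (1 / ((m : ℝ) * ((m : ℝ) - 1))) * (SxxSum κ X - SxxSum κ X')
      ≤ (1 / ((m : ℝ) * ((m : ℝ) - 1))) * (2 * ((m : ℝ) - 1) * K) :=
    mul_le_mul_of_nonneg_left ((le_abs_self _).trans h1) hc1.le
  have e2 : -((2 / ((m : ℝ) * (m : ℝ))) * (SxySum κ X Y - SxySum κ X' Y))
      ≤ (2 / ((m : ℝ) * (m : ℝ))) * ((m : ℝ) * K) := by
    rw [← mul_neg]
    exact mul_le_mul_of_nonneg_left ((neg_le_abs _).trans h2) hc2.le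
  have heq : (1 / ((m : ℝ) * ((m : ℝ) - 1))) * (2 * ((m : ℝ) - 1) * K)
      + (2 / ((m : ℝ) * (m : ℝ))) * ((m : ℝ) * K) = 4 * K / (m : ℝ) := by
    field_simp
    ring
  linarith

lemma mmdUF_diffY_le (hb : ∀ x y, 0 ≤ κ x y ∧ κ x y ≤ K) (hm : 2 ≤ m) (j₀ : Fin m)
    (X Y Y' : Fin m → 𝓧) (hY : ∀ j, j ≠ j₀ → Y j = Y' j) :
    mmdUF κ X Y - mmdUF κ X Y' ≤ 4 * K / (m : ℝ) := by
  have hm1 : (1 : ℝ) < (m : ℝ) := by exact_mod_cast hm.trans_lt' one_lt_two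
  have hm0 : (m : ℝ) ≠ 0 := by linarith
  have hm1' : (m : ℝ) - 1 ≠ 0 := by linarith
  have hc1 : (0 : ℝ) < 1 / ((m : ℝ) * ((m : ℝ) - 1)) :=
    div_pos one_pos (mul_pos (by linarith) (by linarith))
  have hc2 : (0 : ℝ) < 2 / ((m : ℝ) * (m : ℝ)) :=
    div_pos two_pos (mul_pos (by linarith) (by linarith))
  have h1 := SxxSum_diff_le hb j₀ Y Y' hY
  have h2 := SxySum_diffY_le hb j₀ X Y Y' hY
  have hkey : mmdUF κ X Y - mmdUF κ X Y'
      = (1 / ((m : ℝ) * ((m : ℝ) - 1))) * (SxxSum κ Y - SxxSum κ Y')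
        - (2 / ((m : ℝ) * (m : ℝ))) * (SxySum κ X Y - SxySum κ X Y') := by
    unfold mmdUF; ring
  have e1 : (1 / ((m : ℝ) * ((m : ℝ) - 1))) * (SxxSum κ Y - SxxSum κ Y')
      ≤ (1 / ((m : ℝ) * ((m : ℝ) - 1))) * (2 * ((m : ℝ) - 1) * K) :=
    mul_le_mul_of_nonneg_left ((le_abs_self _).trans h1) hc1.le
  have e2 : -((2 / ((m : ℝ) * (m : ℝ))) * (SxySum κ X Y - SxySum κ X Y'))
      ≤ (2 / ((m : ℝ) * (m : ℝ))) * ((m : ℝ) * K) := by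
    rw [← mul_neg]
    exact mul_le_mul_of_nonneg_left ((neg_le_abs _).trans h2) hc2.le
  have heq : (1 / ((m : ℝ) * ((m : ℝ) - 1))) * (2 * ((m : ℝ) - 1) * K)
      + (2 / ((m : ℝ) * (m : ℝ))) * ((m : ℝ) * K) = 4 * K / (m : ℝ) := by
    field_simp
    ring
  linarith

end Bounds
end App

section Integrals
open MeasureTheory Real

variable {𝓧 : Type*} [MeasurableSpace 𝓧]

lemma pi_map_eval {m : ℕ} (p : Measure 𝓧) [IsProbabilityMeasure p] (i : Fin m) :
    (Measure.pi fun _ : Fin m => p).map (fun x => x i) = p := by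
  apply Measure.ext
  intro s hs
  rw [Measure.map_apply (measurable_pi_apply i) hs]
  have hpre : (fun x : Fin m → 𝓧 => x i) ⁻¹' s
      = Set.pi Set.univ (Function.update (fun _ => Set.univ) i s) := by
    ext x
    simp only [Set.mem_preimage, Set.mem_pi, Set.mem_univ, true_implies]
    constructor
    · intro h k
      rcases eq_or_ne k i with rfl | hki
      · rwa [Function.update_self]
      · rw [Function.update_of_ne hki]; trivial
    · intro h
      have := h i
      rwa [Function.update_self] at this
  rw [hpre, Measure.pi_pi]
  have hcomp : (fun k => p (Function.update (fun _ => Set.univ) i s k))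
      = Function.update (fun _ => p Set.univ) i (p s) := by
    funext k
    rcases eq_or_ne k i with rfl | hki
    · rw [Function.update_self, Function.update_self]
    · rw [Function.update_of_ne hki, Function.update_of_ne hki]
  rw [hcomp, Finset.prod_update_of_mem (Finset.mem_univ i)]
  simp [measure_univ]

lemma pi_map_pair {m : ℕ} (p : Measure 𝓧) [IsProbabilityMeasure p] {i j : Fin m}
    (hij : i ≠ j) :
    (Measure.pi fun _ : Fin m => p).map (fun x => (x i, x j)) = p.prod p := by
  symm
  apply Measure.prod_eq
  intro s t hs ht
  rw [Measure.map_apply ((measurable_pi_apply i).prodMk (measurable_pi_apply j))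
    (hs.prod ht)]
  have hpre : (fun x : Fin m → 𝓧 => (x i, x j)) ⁻¹' (s ×ˢ t)
      = Set.pi Set.univ (Function.update (Function.update (fun _ => Set.univ) i s) j t) := by
    ext x
    simp only [Set.mem_preimage, Set.mem_prod, Set.mem_pi, Set.mem_univ, true_implies]
    constructor
    · rintro ⟨h1, h2⟩ k
      rcases eq_or_ne k j with rfl | hkj
      · rwa [Function.update_self]
      · rw [Function.update_of_ne hkj]
        rcases eq_or_ne k i with rfl | hki
        · rwa [Function.update_self]
        · rw [Function.update_of_ne hki]; trivial
    · intro h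
      constructor
      · have := h i
        rwa [Function.update_of_ne hij, Function.update_self] at this
      · have := h j
        rwa [Function.update_self] at this
  rw [hpre, Measure.pi_pi]
  have hcomp : (fun k => p (Function.update (Function.update (fun _ => Set.univ) i s) j t k))
      = Function.update (Function.update (fun _ => p Set.univ) i (p s)) j (p t) := by
    funext k
    rcases eq_or_ne k j with rfl | hkj
    · rw [Function.update_self, Function.update_self]
    · rw [Function.update_of_ne hkj, Function.update_of_ne hkj]
      rcases eq_or_ne k i with rfl | hki
      · rw [Function.update_self, Function.update_self]
      · rw [Function.update_of_ne hki, Function.update_of_ne hki]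
  rw [hcomp, Finset.prod_update_of_mem (Finset.mem_univ j),
    Finset.prod_update_of_mem
      (Finset.mem_sdiff.2 ⟨Finset.mem_univ i, by simp [hij]⟩)]
  simp [measure_univ, mul_comm]

variable (p q : Measure 𝓧) [IsProbabilityMeasure p] [IsProbabilityMeasure q] {m : ℕ}

lemma prodpi_map_fst_pair {i j : Fin m} (hij : i ≠ j) :
    ((Measure.pi fun _ : Fin m => p).prod (Measure.pi fun _ : Fin m => q)).map
      (fun z => (z.1 i, z.1 j)) = p.prod p := by
  have hco : (fun z : (Fin m → 𝓧) × (Fin m → 𝓧) => (z.1 i, z.1 j))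
      = (fun x : Fin m → 𝓧 => (x i, x j)) ∘ Prod.fst := rfl
  rw [hco, ← Measure.map_map ((measurable_pi_apply i).prodMk (measurable_pi_apply j))
    measurable_fst]
  rw [Measure.map_fst_prod]
  simp only [measure_univ, one_smul]
  exact pi_map_pair p hij

lemma prodpi_map_snd_pair {i j : Fin m} (hij : i ≠ j) :
    ((Measure.pi fun _ : Fin m => p).prod (Measure.pi fun _ : Fin m => q)).map
      (fun z => (z.2 i, z.2 j)) = q.prod q := by
  have hco : (fun z : (Fin m → 𝓧) × (Fin m → 𝓧) => (z.2 i, z.2 j))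
      = (fun x : Fin m → 𝓧 => (x i, x j)) ∘ Prod.snd := rfl
  rw [hco, ← Measure.map_map ((measurable_pi_apply i).prodMk (measurable_pi_apply j))
    measurable_snd]
  rw [Measure.map_snd_prod]
  simp only [measure_univ, one_smul]
  exact pi_map_pair q hij

lemma prodpi_map_cross (i j : Fin m) :
    ((Measure.pi fun _ : Fin m => p).prod (Measure.pi fun _ : Fin m => q)).map
      (fun z => (z.1 i, z.2 j)) = p.prod q := by
  have hco : (fun z : (Fin m → 𝓧) × (Fin m → 𝓧) => (z.1 i, z.2 j))
      = Prod.map (fun x : Fin m → 𝓧 => x i) (fun y : Fin m → 𝓧 => y j) := rfl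
  rw [hco, ← Measure.map_prod_map _ _ (measurable_pi_apply i) (measurable_pi_apply j)]
  rw [pi_map_eval, pi_map_eval]

end Integrals

section Unbias
open MeasureTheory Real

variable {𝓧 : Type*} [MeasurableSpace 𝓧] {κ : 𝓧 → 𝓧 → ℝ} {K : ℝ}
  (p q : Measure 𝓧) [IsProbabilityMeasure p] [IsProbabilityMeasure q] {m : ℕ}

lemma uncurry_integrable (hκ : Measurable (Function.uncurry κ))
    (hb : ∀ x y, 0 ≤ κ x y ∧ κ x y ≤ K)
    (μ ν : Measure 𝓧) [IsProbabilityMeasure μ] [IsProbabilityMeasure ν] :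
    Integrable (Function.uncurry κ) (μ.prod ν) :=
  integrable_of_bounds hκ.aestronglyMeasurable (a := 0) (b := K)
    (fun w => (hb w.1 w.2).1) (fun w => (hb w.1 w.2).2)

lemma term_int_xx (hκ : Measurable (Function.uncurry κ))
    (hb : ∀ x y, 0 ≤ κ x y ∧ κ x y ≤ K) {i j : Fin m} (hij : i ≠ j) :
    ∫ z, κ (z.1 i) (z.1 j)
        ∂((Measure.pi fun _ : Fin m => p).prod (Measure.pi fun _ : Fin m => q))
      = ∫ x, ∫ x', κ x x' ∂p ∂p := by
  have hg : Measurable (fun z : (Fin m → 𝓧) × (Fin m → 𝓧) => (z.1 i, z.1 j)) :=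
    ((measurable_pi_apply i).comp measurable_fst).prodMk
      ((measurable_pi_apply j).comp measurable_fst)
  have h1 := integral_map (μ := (Measure.pi fun _ : Fin m => p).prod
      (Measure.pi fun _ : Fin m => q)) hg.aemeasurable
      (f := Function.uncurry κ) hκ.aestronglyMeasurable
  rw [prodpi_map_fst_pair p q hij] at h1
  simp only [Function.uncurry_apply_pair] at h1
  rw [← h1, integral_prod _ (uncurry_integrable hκ hb p p)]
  simp only [Function.uncurry_apply_pair]

lemma term_int_yy (hκ : Measurable (Function.uncurry κ))
    (hb : ∀ x y, 0 ≤ κ x y ∧ κ x y ≤ K) {i j : Fin m} (hij : i ≠ j) :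
    ∫ z, κ (z.2 i) (z.2 j)
        ∂((Measure.pi fun _ : Fin m => p).prod (Measure.pi fun _ : Fin m => q))
      = ∫ y, ∫ y', κ y y' ∂q ∂q := by
  have hg : Measurable (fun z : (Fin m → 𝓧) × (Fin m → 𝓧) => (z.2 i, z.2 j)) :=
    ((measurable_pi_apply i).comp measurable_snd).prodMk
      ((measurable_pi_apply j).comp measurable_snd)
  have h1 := integral_map (μ := (Measure.pi fun _ : Fin m => p).prod
      (Measure.pi fun _ : Fin m => q)) hg.aemeasurable
      (f := Function.uncurry κ) hκ.aestronglyMeasurable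
  rw [prodpi_map_snd_pair p q hij] at h1
  simp only [Function.uncurry_apply_pair] at h1
  rw [← h1, integral_prod _ (uncurry_integrable hκ hb q q)]
  simp only [Function.uncurry_apply_pair]

lemma term_int_xy (hκ : Measurable (Function.uncurry κ))
    (hb : ∀ x y, 0 ≤ κ x y ∧ κ x y ≤ K) (i j : Fin m) :
    ∫ z, κ (z.1 i) (z.2 j)
        ∂((Measure.pi fun _ : Fin m => p).prod (Measure.pi fun _ : Fin m => q))
      = ∫ x, ∫ y, κ x y ∂q ∂p := by
  have hg : Measurable (fun z : (Fin m → 𝓧) × (Fin m → 𝓧) => (z.1 i, z.2 j)) :=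
    ((measurable_pi_apply i).comp measurable_fst).prodMk
      ((measurable_pi_apply j).comp measurable_snd)
  have h1 := integral_map (μ := (Measure.pi fun _ : Fin m => p).prod
      (Measure.pi fun _ : Fin m => q)) hg.aemeasurable
      (f := Function.uncurry κ) hκ.aestronglyMeasurable
  rw [prodpi_map_cross p q i j] at h1
  simp only [Function.uncurry_apply_pair] at h1
  rw [← h1, integral_prod _ (uncurry_integrable hκ hb p q)]
  simp only [Function.uncurry_apply_pair]

lemma term_integrable (hκ : Measurable (Function.uncurry κ))
    (hb : ∀ x y, 0 ≤ κ x y ∧ κ x y ≤ K)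
    {g h : ((Fin m → 𝓧) × (Fin m → 𝓧)) → 𝓧} (hg : Measurable g) (hh : Measurable h) :
    Integrable (fun z => κ (g z) (h z))
      ((Measure.pi fun _ : Fin m => p).prod (Measure.pi fun _ : Fin m => q)) :=
  integrable_of_bounds (hκ.comp (hg.prodMk hh)).aestronglyMeasurable (a := 0) (b := K)
    (fun z => (hb _ _).1) (fun z => (hb _ _).2)

lemma integral_mmdUF_eq (hκ : Measurable (Function.uncurry κ))
    (hb : ∀ x y, 0 ≤ κ x y ∧ κ x y ≤ K) (hm : 2 ≤ m) :
    ∫ z, mmdUF κ z.1 z.2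
        ∂((Measure.pi fun _ : Fin m => p).prod (Measure.pi fun _ : Fin m => q))
      = mmdSq κ p q := by
  have hm1 : (1 : ℝ) < (m : ℝ) := by exact_mod_cast hm.trans_lt' one_lt_two
  have hm0 : (m : ℝ) ≠ 0 := by linarith
  have hm1' : (m : ℝ) - 1 ≠ 0 := by linarith
  set Pm := (Measure.pi fun _ : Fin m => p).prod (Measure.pi fun _ : Fin m => q) with hPm
  -- integrability of the three sums
  have hint_xx : Integrable (fun z : (Fin m → 𝓧) × (Fin m → 𝓧) => SxxSum κ z.1) Pm := by
    unfold SxxSum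
    apply integrable_finset_sum
    intro i _
    apply integrable_finset_sum
    intro j _
    exact term_integrable p q hκ hb ((measurable_pi_apply i).comp measurable_fst)
      ((measurable_pi_apply j).comp measurable_fst)
  have hint_yy : Integrable (fun z : (Fin m → 𝓧) × (Fin m → 𝓧) => SxxSum κ z.2) Pm := by
    unfold SxxSum
    apply integrable_finset_sum
    intro i _
    apply integrable_finset_sum
    intro j _
    exact term_integrable p q hκ hb ((measurable_pi_apply i).comp measurable_snd)
      ((measurable_pi_apply j).comp measurable_snd)
  have hint_xy : Integrable (fun z : (Fin m → 𝓧) × (Fin m → 𝓧) => SxySum κ z.1 z.2) Pm := by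
    unfold SxySum
    apply integrable_finset_sum
    intro i _
    apply integrable_finset_sum
    intro j _
    exact term_integrable p q hκ hb ((measurable_pi_apply i).comp measurable_fst)
      ((measurable_pi_apply j).comp measurable_snd)
  -- values of the three integrals
  have hSxx : ∫ z, SxxSum κ z.1 ∂Pm = (m : ℝ) * ((m : ℝ) - 1) * ∫ x, ∫ x', κ x x' ∂p ∂p := by
    unfold SxxSum
    rw [integral_finset_sum]
    · have : ∀ i : Fin m, ∫ z, ∑ j ∈ Finset.univ.erase i, κ (z.1 i) (z.1 j) ∂Pm
          = ((m : ℝ) - 1) * ∫ x, ∫ x', κ x x' ∂p ∂p := by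
        intro i
        rw [integral_finset_sum]
        · have heach : ∀ j ∈ Finset.univ.erase i,
              ∫ z, κ (z.1 i) (z.1 j) ∂Pm = ∫ x, ∫ x', κ x x' ∂p ∂p := by
            intro j hj
            exact term_int_xx p q hκ hb ((Finset.mem_erase.1 hj).1).symm
          rw [Finset.sum_congr rfl heach, Finset.sum_const, nsmul_eq_mul,
            Finset.card_erase_of_mem (Finset.mem_univ _), Finset.card_univ, Fintype.card_fin,
            Nat.cast_sub (by omega : 1 ≤ m), Nat.cast_one]
        · intro j _
          exact term_integrable p q hκ hb ((measurable_pi_apply i).comp measurable_fst)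
            ((measurable_pi_apply j).comp measurable_fst)
      rw [Finset.sum_congr rfl fun i _ => this i, Finset.sum_const, nsmul_eq_mul,
        Finset.card_univ, Fintype.card_fin]
      ring
    · intro i _
      apply integrable_finset_sum
      intro j _
      exact term_integrable p q hκ hb ((measurable_pi_apply i).comp measurable_fst)
        ((measurable_pi_apply j).comp measurable_fst)
  have hSyy : ∫ z, SxxSum κ z.2 ∂Pm = (m : ℝ) * ((m : ℝ) - 1) * ∫ y, ∫ y', κ y y' ∂q ∂q := by
    unfold SxxSum
    rw [integral_finset_sum]
    · have : ∀ i : Fin m, ∫ z, ∑ j ∈ Finset.univ.erase i, κ (z.2 i) (z.2 j) ∂Pm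
          = ((m : ℝ) - 1) * ∫ y, ∫ y', κ y y' ∂q ∂q := by
        intro i
        rw [integral_finset_sum]
        · have heach : ∀ j ∈ Finset.univ.erase i,
              ∫ z, κ (z.2 i) (z.2 j) ∂Pm = ∫ y, ∫ y', κ y y' ∂q ∂q := by
            intro j hj
            exact term_int_yy p q hκ hb ((Finset.mem_erase.1 hj).1).symm
          rw [Finset.sum_congr rfl heach, Finset.sum_const, nsmul_eq_mul,
            Finset.card_erase_of_mem (Finset.mem_univ _), Finset.card_univ, Fintype.card_fin,
            Nat.cast_sub (by omega : 1 ≤ m), Nat.cast_one]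
        · intro j _
          exact term_integrable p q hκ hb ((measurable_pi_apply i).comp measurable_snd)
            ((measurable_pi_apply j).comp measurable_snd)
      rw [Finset.sum_congr rfl fun i _ => this i, Finset.sum_const, nsmul_eq_mul,
        Finset.card_univ, Fintype.card_fin]
      ring
    · intro i _
      apply integrable_finset_sum
      intro j _
      exact term_integrable p q hκ hb ((measurable_pi_apply i).comp measurable_snd)
        ((measurable_pi_apply j).comp measurable_snd)
  have hSxy : ∫ z, SxySum κ z.1 z.2 ∂Pm = (m : ℝ) * (m : ℝ) * ∫ x, ∫ y, κ x y ∂q ∂p := by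
    unfold SxySum
    rw [integral_finset_sum]
    · have : ∀ i : Fin m, ∫ z, ∑ j : Fin m, κ (z.1 i) (z.2 j) ∂Pm
          = (m : ℝ) * ∫ x, ∫ y, κ x y ∂q ∂p := by
        intro i
        rw [integral_finset_sum]
        · rw [Finset.sum_congr rfl fun j _ => term_int_xy p q hκ hb i j, Finset.sum_const,
            nsmul_eq_mul, Finset.card_univ, Fintype.card_fin]
        · intro j _
          exact term_integrable p q hκ hb ((measurable_pi_apply i).comp measurable_fst)
            ((measurable_pi_apply j).comp measurable_snd)
      rw [Finset.sum_congr rfl fun i _ => this i, Finset.sum_const, nsmul_eq_mul,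
        Finset.card_univ, Fintype.card_fin]
      ring
    · intro i _
      apply integrable_finset_sum
      intro j _
      exact term_integrable p q hκ hb ((measurable_pi_apply i).comp measurable_fst)
        ((measurable_pi_apply j).comp measurable_snd)
  have hsplit : ∫ z, mmdUF κ z.1 z.2 ∂Pm
      = (1 / ((m : ℝ) * ((m : ℝ) - 1))) * ∫ z, SxxSum κ z.1 ∂Pm
        + (1 / ((m : ℝ) * ((m : ℝ) - 1))) * ∫ z, SxxSum κ z.2 ∂Pm
        - (2 / ((m : ℝ) * (m : ℝ))) * ∫ z, SxySum κ z.1 z.2 ∂Pm := by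
    have hA : Integrable (fun z : (Fin m → 𝓧) × (Fin m → 𝓧) =>
        (1 / ((m : ℝ) * ((m : ℝ) - 1))) * SxxSum κ z.1) Pm := hint_xx.const_mul _
    have hB : Integrable (fun z : (Fin m → 𝓧) × (Fin m → 𝓧) =>
        (1 / ((m : ℝ) * ((m : ℝ) - 1))) * SxxSum κ z.2) Pm := hint_yy.const_mul _
    have hC : Integrable (fun z : (Fin m → 𝓧) × (Fin m → 𝓧) =>
        (2 / ((m : ℝ) * (m : ℝ))) * SxySum κ z.1 z.2) Pm := hint_xy.const_mul _
    have hAB : Integrable (fun z : (Fin m → 𝓧) × (Fin m → 𝓧) =>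
        (1 / ((m : ℝ) * ((m : ℝ) - 1))) * SxxSum κ z.1
          + (1 / ((m : ℝ) * ((m : ℝ) - 1))) * SxxSum κ z.2) Pm := hA.add hB
    unfold mmdUF
    rw [integral_sub hAB hC, integral_add hA hB,
      integral_const_mul, integral_const_mul, integral_const_mul]
  rw [hsplit, hSxx, hSyy, hSxy]
  unfold mmdSq
  field_simp
  ring

end Unbias

/-- One-sided concentration for an anomalous sequence (lower tail). -/
theorem anomalous_lower_tail
    {𝓧 : Type*} [MeasurableSpace 𝓧]
    (κ : 𝓧 → 𝓧 → ℝ) (K : ℝ)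
    (hκ : Measurable (Function.uncurry κ)) (hb : ∀ x y, 0 ≤ κ x y ∧ κ x y ≤ K)
    (p q : Measure 𝓧) [IsProbabilityMeasure p] [IsProbabilityMeasure q]
    {m : ℕ} (hm : 2 ≤ m)
    {Ω : Type*} [MeasurableSpace Ω] (P : Measure Ω) [IsProbabilityMeasure P]
    (X : Ω → Fin m → 𝓧) (Y : Ω → Fin m → 𝓧)
    (hX : Measurable X) (hY : Measurable Y)
    (hlaw : Measure.map (fun ω => (X ω, Y ω)) P
      = (Measure.pi fun _ : Fin m => p).prod (Measure.pi fun _ : Fin m => q))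
    (δ : ℝ) (hδ0 : 0 < δ) (hδ : δ < mmdSq κ p q) :
    P {ω | mmdU κ (X ω) (Y ω) ≤ δ}
      ≤ ENNReal.ofReal
          (Real.exp (-(m : ℝ) * (mmdSq κ p q - δ) ^ 2 / (16 * K ^ 2))) := by
  classical
  have hm1 : (1 : ℝ) < (m : ℝ) := by exact_mod_cast hm.trans_lt' one_lt_two
  have hm0 : (m : ℝ) ≠ 0 := by linarith
  -- 𝓧 is nonempty, so 0 ≤ K
  have hne : Nonempty 𝓧 := by
    by_contra h
    rw [not_nonempty_iff] at h
    have h1 : p Set.univ = 1 := measure_univ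
    rw [Set.univ_eq_empty_iff.2 h] at h1
    simp at h1
  obtain ⟨x₀⟩ := hne
  have hK0 : 0 ≤ K := le_trans (hb x₀ x₀).1 (hb x₀ x₀).2
  -- in fact K > 0
  have hKpos : 0 < K := by
    rcases eq_or_lt_of_le hK0 with hKz | h
    · exfalso
      have hκz : ∀ x y, κ x y = 0 := fun x y =>
        le_antisymm (by rw [hKz]; exact (hb x y).2) (hb x y).1
      have : mmdSq κ p q = 0 := by simp [mmdSq, hκz]
      rw [this] at hδ
      linarith
    · exact h
  set Pm := (Measure.pi fun _ : Fin m => p).prod (Measure.pi fun _ : Fin m => q) with hPm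
  set F : (Fin m → 𝓧) × (Fin m → 𝓧) → ℝ := fun z => mmdUF κ z.1 z.2 with hF
  -- measurability of F
  have hSxx1 : Measurable fun z : (Fin m → 𝓧) × (Fin m → 𝓧) => SxxSum κ z.1 := by
    unfold SxxSum
    apply Finset.measurable_sum
    intro i _
    apply Finset.measurable_sum
    intro j _
    have hzi : Measurable fun z : (Fin m → 𝓧) × (Fin m → 𝓧) => z.1 i :=
      (measurable_pi_apply i).comp measurable_fst
    have hzj : Measurable fun z : (Fin m → 𝓧) × (Fin m → 𝓧) => z.1 j :=
      (measurable_pi_apply j).comp measurable_fst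
    exact hκ.comp (hzi.prodMk hzj)
  have hSxx2 : Measurable fun z : (Fin m → 𝓧) × (Fin m → 𝓧) => SxxSum κ z.2 := by
    unfold SxxSum
    apply Finset.measurable_sum
    intro i _
    apply Finset.measurable_sum
    intro j _
    have hzi : Measurable fun z : (Fin m → 𝓧) × (Fin m → 𝓧) => z.2 i :=
      (measurable_pi_apply i).comp measurable_snd
    have hzj : Measurable fun z : (Fin m → 𝓧) × (Fin m → 𝓧) => z.2 j :=
      (measurable_pi_apply j).comp measurable_snd
    exact hκ.comp (hzi.prodMk hzj)
  have hSxy : Measurable fun z : (Fin m → 𝓧) × (Fin m → 𝓧) => SxySum κ z.1 z.2 := by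
    unfold SxySum
    apply Finset.measurable_sum
    intro i _
    apply Finset.measurable_sum
    intro j _
    have hzi : Measurable fun z : (Fin m → 𝓧) × (Fin m → 𝓧) => z.1 i :=
      (measurable_pi_apply i).comp measurable_fst
    have hzj : Measurable fun z : (Fin m → 𝓧) × (Fin m → 𝓧) => z.2 j :=
      (measurable_pi_apply j).comp measurable_snd
    exact hκ.comp (hzi.prodMk hzj)
  have hFmeas : Measurable F := by
    rw [hF]
    unfold mmdUF
    exact ((hSxx1.const_mul _).add (hSxx2.const_mul _)).sub (hSxy.const_mul _)
  have hFbd : ∀ z, |F z| ≤ 4 * K := fun z => mmdUF_abs_le hb hK0 hm _ _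
  -- rewrite the event
  have hev : {ω | mmdU κ (X ω) (Y ω) ≤ δ} = (fun ω => (X ω, Y ω)) ⁻¹' {z | F z ≤ δ} := by
    ext ω
    simp [hF, mmdU_eq_mmdUF]
  have hsetm : MeasurableSet {z : (Fin m → 𝓧) × (Fin m → 𝓧) | F z ≤ δ} :=
    measurableSet_le hFmeas measurable_const
  rw [hev, ← Measure.map_apply (hX.prodMk hY) hsetm, hlaw]
  -- the sub-Gaussian bound for F under Pm
  set μsum : (Fin m ⊕ Fin m) → Measure 𝓧 := Sum.elim (fun _ => p) (fun _ => q) with hμsum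
  haveI : ∀ i, IsProbabilityMeasure (μsum i) := by
    intro i
    cases i <;> (simp only [hμsum, Sum.elim_inl, Sum.elim_inr]; infer_instance)
  set S := MeasurableEquiv.sumPiEquivProdPi (fun _ : Fin m ⊕ Fin m => 𝓧) with hS
  have hmpS : MeasurePreserving S (Measure.pi μsum) Pm := by
    have h := measurePreserving_sumPiEquivProdPi_symm μsum
    have h2 := h.symm S.symm
    exact h2
  have hSapp : ∀ (x : (Fin m ⊕ Fin m) → 𝓧),
      S x = (fun a => x (Sum.inl a), fun a => x (Sum.inr a)) := fun x => rfl
  have hdiffsum : ∀ (i : Fin m ⊕ Fin m) (x x' : (Fin m ⊕ Fin m) → 𝓧),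
      (∀ j, j ≠ i → x j = x' j) → (F ∘ S) x - (F ∘ S) x' ≤ 4 * K / (m : ℝ) := by
    intro i x x' hxx'
    simp only [Function.comp_apply, hSapp, hF]
    cases i with
    | inl i₀ =>
      have hYeq : (fun a => x (Sum.inr a)) = (fun a => x' (Sum.inr a)) :=
        funext fun a => hxx' (Sum.inr a) (by simp)
      rw [hYeq]
      exact mmdUF_diffX_le hb hm i₀ _ _ _
        (fun j hj => hxx' (Sum.inl j) (by simp [hj]))
    | inr j₀ =>
      have hXeq : (fun a => x (Sum.inl a)) = (fun a => x' (Sum.inl a)) :=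
        funext fun a => hxx' (Sum.inl a) (by simp)
      rw [hXeq]
      exact mmdUF_diffY_le hb hm j₀ _ _ _
        (fun j hj => hxx' (Sum.inr j) (by simp [hj]))
  have hmgf_pi : mgfB (Measure.pi μsum) (F ∘ S)
      (∑ _i : Fin m ⊕ Fin m, (4 * K / (m : ℝ)) ^ 2) :=
    mgfB_pi μsum (hFmeas.comp S.measurable) (C := 4 * K) (fun x => hFbd _) hdiffsum
  have hmgf : mgfB Pm F (∑ _i : Fin m ⊕ Fin m, (4 * K / (m : ℝ)) ^ 2) := by
    rw [← hmpS.map_eq]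
    exact mgfB_map S.measurable hFmeas hmgf_pi
  have hveq : (∑ _i : Fin m ⊕ Fin m, (4 * K / (m : ℝ)) ^ 2) = 32 * K ^ 2 / (m : ℝ) := by
    rw [Finset.sum_const, nsmul_eq_mul, Finset.card_univ, Fintype.card_sum, Fintype.card_fin]
    push_cast
    field_simp
    ring
  rw [hveq] at hmgf
  have hvpos : (0 : ℝ) < 32 * K ^ 2 / (m : ℝ) := by positivity
  -- the mean of F
  have hmean : ∫ z, F z ∂Pm = mmdSq κ p q := integral_mmdUF_eq p q hκ hb hm
  set ε : ℝ := mmdSq κ p q - δ with hε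
  have hεpos : 0 < ε := by rw [hε]; linarith
  have hsetrw : {z : (Fin m → 𝓧) × (Fin m → 𝓧) | F z ≤ δ}
      = {z | F z ≤ (∫ z, F z ∂Pm) - ε} := by
    rw [hmean]
    ext z
    simp only [Set.mem_setOf_eq, hε]
    constructor <;> intro <;> linarith
  rw [hsetrw]
  have hfinal := mgfB_lower_tail hFmeas hFbd hvpos hmgf hεpos
  refine hfinal.trans (le_of_eq ?_)
  congr 1
  congr 1
  rw [hε]
  have hK2 : K ^ 2 ≠ 0 := by positivity
  field_simp
  ring
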